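/- Suppose Ω = p/q for positive integers p and q, and let (n_m)_{m≥1} be a sequence of positive integers with n_{m+1} p > n_m (p+q) for all m. Set k_{2m} := n_m (p+q), k_{2m−1} := n_m p, and r_{2m} := k_{2m} − k_{2m−1} = n_m q. Fix 0 < α < 1. Then for every C₃ > 0 and every δ ∈ (0, 1] there exists ε₀ > 0 such that for all ε ∈ (0, ε₀], all ζ ∈ Ξ with |ζ| ≤ ε^{α−1}, and all integers m ≥ 2: X_{k_{2m}} ∈ Γ_{δ/r_{2m}}(β_l), X_{k_{2m−1}} ∈ Γ_{δ/r_{2m}}(β_l), and neither of the inequalities |E_{i,j}(ε, k_{2m}, k_{2m−1})(ζ)| ≥ C₃ |X_{k_{2m}}| / r_{2m} and |E_{i,j}(ε, k_{2m}, k_{2m−1})(ζ)| ≥ C₃ |X_{k_{2m−1}}| holds. -/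

import Mathlib

noncomputable section

open scoped RealInnerProductSpace

/-- `ℝ³` with the Euclidean norm, coordinates `ζ = (σ, γ, η) = (ζ 0, ζ 1, ζ 2)`. -/
abbrev E3 : Type := EuclideanSpace ℝ (Fin 3)

/-- The frequency set `Ξ := {ζ ∈ ℝ³ : γ ≥ 0} \ {0}`. -/
def Xi : Set E3 := {ζ : E3 | 0 ≤ ζ 1 ∧ ζ ≠ 0}

/-- The cone `Γ_δ(β) := {ζ ∈ Ξ : |ζ/|ζ| − β| ≤ δ or |ζ/|ζ| + β| ≤ δ}`. -/
def cone (β : E3) (δ : ℝ) : Set E3 :=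
  {ζ : E3 | ζ ∈ Xi ∧ (‖‖ζ‖⁻¹ • ζ - β‖ ≤ δ ∨ ‖‖ζ‖⁻¹ • ζ + β‖ ≤ δ)}

/-- `X_k := ζ + (k/ε) β_l`. -/
def Xk (βl ζ : E3) (ε : ℝ) (k : ℤ) : E3 := ζ + (((k : ℝ)) / ε) • βl

/-- A bi-infinite integer sequence is admissible if it is strictly increasing or
strictly decreasing. -/
def Admissible (k : ℤ → ℤ) : Prop := StrictMono k ∨ StrictAnti k

/-- The oscillatory exponent `E_{i,j}(ε, k, k−r)(ζ) := ω_i(X_k) − (r/ε) ω_N(β_l) − ω_j(X_{k−r})`. -/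
def Eij (ωi ωj ωN : E3 → ℂ) (βl : E3) (ε : ℝ) (k r : ℤ) (ζ : E3) : ℂ :=
  ωi (Xk βl ζ ε k) - ((r : ℂ) / (ε : ℂ)) * ωN βl - ωj (Xk βl ζ ε (k - r))

/-- Failure of the oscillatory-exponent lower bounds along resonant sequences: if `Ω = p/q`
with `p, q` positive integers and `k_{2m} := n_m(p+q)`, `k_{2m−1} := n_m p`,
`r_{2m} := n_m q`, then for every `C₃ > 0` and `δ ∈ (0,1]` there is `ε₀ > 0` such that for
all `ε ∈ (0, ε₀]`, all `ζ ∈ Ξ` with `|ζ| ≤ ε^{α−1}`, and all `m ≥ 2`: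
`X_{k_{2m}}, X_{k_{2m−1}} ∈ Γ_{δ/r_{2m}}(β_l)`, and neither
`|E_{i,j}| ≥ C₃ |X_{k_{2m}}|/r_{2m}` nor `|E_{i,j}| ≥ C₃ |X_{k_{2m−1}}|` holds. -/
lemma mem_cone_aux (βl : E3) (hβlu : ‖βl‖ = 1) (hβl1 : βl 1 = 0)
    (ζ : E3) (hζ1 : 0 ≤ ζ 1) (s δ' : ℝ) (hs : 0 ≤ s)
    (hlt : ‖ζ‖ < s) (hbound : 2 * ‖ζ‖ ≤ δ' * (s - ‖ζ‖)) :
    ζ + s • βl ∈ cone βl δ' := by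
  set X := ζ + s • βl with hX
  have hXs : ‖s • βl‖ = s := by rw [norm_smul, hβlu, Real.norm_eq_abs, abs_of_nonneg hs, mul_one]
  have h1 : s - ‖ζ‖ ≤ ‖X‖ := by
    have h := norm_sub_le X ζ
    have h2 : X - ζ = s • βl := by rw [hX]; abel
    rw [h2, hXs] at h; linarith
  have hXpos : 0 < ‖X‖ := lt_of_lt_of_le (by linarith) h1
  have h2 : ‖X‖ ≤ s + ‖ζ‖ := by
    have h := norm_add_le ζ (s • βl); rw [hXs] at h; linarith
  have hδ'0 : 0 ≤ δ' := by nlinarith [norm_nonneg ζ]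
  refine ⟨⟨?_, norm_pos_iff.mp hXpos⟩, Or.inl ?_⟩
  · show 0 ≤ X 1
    have h3 : X 1 = ζ 1 + s * βl 1 := rfl
    rw [h3, hβl1, mul_zero, add_zero]; exact hζ1
  · have hrw : ‖X‖⁻¹ • X - βl = ‖X‖⁻¹ • (X - ‖X‖ • βl) := by
      rw [smul_sub, smul_smul, inv_mul_cancel₀ hXpos.ne', one_smul]
    rw [hrw, norm_smul, norm_inv, Real.norm_eq_abs, abs_of_pos hXpos]
    have hnum : ‖X - ‖X‖ • βl‖ ≤ 2 * ‖ζ‖ := by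
      have h4 : X - ‖X‖ • βl = ζ + (s - ‖X‖) • βl := by rw [hX, sub_smul]; abel
      rw [h4]
      have h5 := norm_add_le ζ ((s - ‖X‖) • βl)
      rw [norm_smul, hβlu, mul_one, Real.norm_eq_abs] at h5
      have habs : |s - ‖X‖| ≤ ‖ζ‖ := abs_sub_le_iff.mpr ⟨by linarith, by linarith⟩
      linarith
    rw [inv_mul_le_iff₀ hXpos]
    calc ‖X - ‖X‖ • βl‖ ≤ 2 * ‖ζ‖ := hnum
      _ ≤ δ' * (s - ‖ζ‖) := hbound
      _ ≤ ‖X‖ * δ' := by nlinarith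

set_option maxHeartbeats 2000000 in
theorem stmt_13 (βl : E3) (hβlu : ‖βl‖ = 1) (hβl1 : βl 1 = 0)
    (L : ℝ) (hL : 0 < L) (ωi ωj ωN : E3 → ℂ)
    (hiLip : LipschitzWith (Real.toNNReal L) ωi)
    (hjLip : LipschitzWith (Real.toNNReal L) ωj)
    (hNLip : LipschitzWith (Real.toNNReal L) ωN)
    (hiLin : ∀ s : ℝ, ωi (s • βl) = (s : ℂ) * ωi βl)
    (hjLin : ∀ s : ℝ, ωj (s • βl) = (s : ℂ) * ωj βl)
    (hNLin : ∀ s : ℝ, ωN (s • βl) = (s : ℂ) * ωN βl)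
    (hne : ωi βl ≠ ωj βl)
    (p q : ℕ) (hp : 0 < p) (hq : 0 < q)
    (hΩ : (ωi βl - ωN βl) / (ωj βl - ωi βl) = (p : ℂ) / (q : ℂ))
    (n : ℕ → ℕ) (hn : ∀ m : ℕ, 1 ≤ m → 0 < n m)
    (hsep : ∀ m : ℕ, 1 ≤ m → n m * (p + q) < n (m + 1) * p)
    (α : ℝ) (hα0 : 0 < α) (hα1 : α < 1) :
    ∀ C₃ : ℝ, 0 < C₃ → ∀ δ : ℝ, 0 < δ → δ ≤ 1 →
    ∃ ε₀ > (0 : ℝ), ∀ ε : ℝ, 0 < ε → ε ≤ ε₀ →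
    ∀ ζ ∈ Xi, ‖ζ‖ ≤ ε ^ (α - 1) →
    ∀ m : ℕ, 2 ≤ m →
      Xk βl ζ ε ((n m * (p + q) : ℕ) : ℤ) ∈ cone βl (δ / ((n m * q : ℕ) : ℝ)) ∧
      Xk βl ζ ε ((n m * p : ℕ) : ℤ) ∈ cone βl (δ / ((n m * q : ℕ) : ℝ)) ∧
      ¬ (C₃ * ‖Xk βl ζ ε ((n m * (p + q) : ℕ) : ℤ)‖ / ((n m * q : ℕ) : ℝ) ≤
          ‖Eij ωi ωj ωN βl ε ((n m * (p + q) : ℕ) : ℤ) ((n m * q : ℕ) : ℤ) ζ‖) ∧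
      ¬ (C₃ * ‖Xk βl ζ ε ((n m * p : ℕ) : ℤ)‖ ≤
          ‖Eij ωi ωj ωN βl ε ((n m * (p + q) : ℕ) : ℤ) ((n m * q : ℕ) : ℤ) ζ‖) := by
  intro C₃ hC₃ δ hδ hδ1
  have hpR : (0:ℝ) < p := by exact_mod_cast hp
  have hqR : (0:ℝ) < q := by exact_mod_cast hq
  set A : ℝ := min 2⁻¹ (min (δ * p / (6 * q)) (C₃ / (8 * L))) with hAdef
  have hA : 0 < A := lt_min (by norm_num) (lt_min (by positivity) (by positivity))
  have hA1 : A ≤ 2⁻¹ := min_le_left _ _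
  have hA2 : A ≤ δ * p / (6 * q) := le_trans (min_le_right _ _) (min_le_left _ _)
  have hA3 : A ≤ C₃ / (8 * L) := le_trans (min_le_right _ _) (min_le_right _ _)
  refine ⟨A ^ (1/α), Real.rpow_pos_of_pos hA _, ?_⟩
  intro ε hε hεle ζ hζΞ hζnorm m hm
  have hεα : ε ^ α ≤ A := by
    calc ε ^ α ≤ (A ^ (1/α)) ^ α := Real.rpow_le_rpow hε.le hεle hα0.le
      _ = A := by
          rw [← Real.rpow_mul hA.le, one_div_mul_cancel hα0.ne', Real.rpow_one]
  have hzb : ‖ζ‖ ≤ A / ε := by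
    have h1 : ε ^ (α - 1) = ε ^ α / ε := by rw [Real.rpow_sub hε, Real.rpow_one]
    rw [h1] at hζnorm
    exact hζnorm.trans (by gcongr)
  have hnm : 0 < n m := hn m (by omega)
  have hnmR : (1:ℝ) ≤ (n m : ℝ) := by exact_mod_cast hnm
  set s : ℝ := ((n m * (p + q) : ℕ) : ℝ) / ε with hsdef
  set s' : ℝ := ((n m * p : ℕ) : ℝ) / ε with hs'def
  have hscast : s = ((n m : ℝ) * ((p:ℝ) + q)) / ε := by rw [hsdef]; push_cast; ring
  have hs'cast : s' = ((n m : ℝ) * (p:ℝ)) / ε := by rw [hs'def]; push_cast; ring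
  have hnp1 : (1:ℝ) ≤ (n m : ℝ) * p := by
    have h : (1:ℝ) ≤ (p:ℝ) := by exact_mod_cast hp
    nlinarith only [h, hnmR]
  have hnq1 : (1:ℝ) ≤ (n m : ℝ) * q := by
    have h : (1:ℝ) ≤ (q:ℝ) := by exact_mod_cast hq
    nlinarith only [h, hnmR]
  have h6Aq : 6 * A * q ≤ δ * p := by
    rw [le_div_iff₀ (by positivity)] at hA2
    linarith
  have hRcast : ((n m * q : ℕ) : ℝ) = (n m : ℝ) * q := by push_cast; ring
  have hXkeq : Xk βl ζ ε ((n m * (p + q) : ℕ) : ℤ) = ζ + s • βl := by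
    unfold Xk; rw [hsdef]; norm_num
  have hXkeq' : Xk βl ζ ε ((n m * p : ℕ) : ℤ) = ζ + s' • βl := by
    unfold Xk; rw [hs'def]; norm_num
  have hXkeq'' : Xk βl ζ ε (((n m * (p + q) : ℕ) : ℤ) - ((n m * q : ℕ) : ℤ)) = ζ + s' • βl := by
    have hc : (((((n m * (p + q) : ℕ) : ℤ) - ((n m * q : ℕ) : ℤ)) : ℤ) : ℝ) = ((n m * p : ℕ) : ℝ) := by
      push_cast; ring
    unfold Xk
    rw [hc, hs'def]
  have hs'lb : 1/ε ≤ s' := by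
    rw [hs'cast]; gcongr <;> linarith
  have hss' : s' ≤ s := by rw [hscast, hs'cast]; gcongr <;> linarith
  have hsq : ((n m : ℝ) * q)/ε ≤ s := by rw [hscast]; gcongr <;> linarith
  have hzlt : ‖ζ‖ < s' := by
    have h : A / ε < 1 / ε := by gcongr; linarith
    linarith
  have hzlts : ‖ζ‖ < s := lt_of_lt_of_le hzlt hss'
  have hs'pos : 0 ≤ s' := le_trans (by positivity) hs'lb
  have hspos : 0 ≤ s := le_trans hs'pos hss'
  have hcone' : 2 * ‖ζ‖ ≤ (δ / ((n m * q : ℕ) : ℝ)) * (s' - ‖ζ‖) := by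
    rw [hRcast, hs'cast]
    rw [div_mul_eq_mul_div, le_div_iff₀ (by positivity)]
    have hz0 := norm_nonneg ζ
    have hkey : 2 * (A/ε) * ((n m : ℝ) * q) ≤ δ * ((n m : ℝ) * p / ε - A/ε) := by
      have e1 : δ * ((n m : ℝ) * p / ε - A/ε) - 2 * (A/ε) * ((n m : ℝ) * q)
          = (δ * ((n m : ℝ) * p - A) - 2 * A * ((n m : ℝ) * q)) / ε := by ring
      have e2 : (0:ℝ) ≤ (δ * ((n m : ℝ) * p - A) - 2 * A * ((n m : ℝ) * q)) / ε := by
        apply div_nonneg _ hε.le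
        have u1 := mul_le_mul_of_nonneg_left h6Aq (by positivity : (0:ℝ) ≤ (n m : ℝ))
        have u2 := mul_le_mul_of_nonneg_left hA1 hδ.le
        have u3 := mul_le_mul_of_nonneg_left hnp1 hδ.le
        linarith only [u1, u2, u3, hδ]
      linarith
    have t1 : 2*‖ζ‖*((n m : ℝ)*q) ≤ 2*(A/ε)*((n m : ℝ)*q) :=
      mul_le_mul_of_nonneg_right (by linarith) (by positivity)
    have t2 : δ * ((n m : ℝ)*p/ε - A/ε) ≤ δ * ((n m : ℝ)*p/ε - ‖ζ‖) :=
      mul_le_mul_of_nonneg_left (by linarith) hδ.le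
    linarith
  have hcone : 2 * ‖ζ‖ ≤ (δ / ((n m * q : ℕ) : ℝ)) * (s - ‖ζ‖) := by
    have hd0 : (0:ℝ) ≤ δ / ((n m * q : ℕ) : ℝ) := by rw [hRcast]; positivity
    exact hcone'.trans (mul_le_mul_of_nonneg_left (by linarith) hd0)
  have hd : ωj βl - ωi βl ≠ 0 := sub_ne_zero.mpr (Ne.symm hne)
  have hqC : (q:ℂ) ≠ 0 := by exact_mod_cast hq.ne'
  have h1 : (q:ℂ) * (ωi βl - ωN βl) = (p:ℂ) * (ωj βl - ωi βl) := by
    field_simp at hΩ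
    linear_combination hΩ
  have hεC : (ε:ℂ) ≠ 0 := by exact_mod_cast hε.ne'
  have hE : Eij ωi ωj ωN βl ε ((n m * (p + q) : ℕ) : ℤ) ((n m * q : ℕ) : ℤ) ζ
      = (ωi (ζ + s • βl) - ωi (s • βl)) - (ωj (ζ + s' • βl) - ωj (s' • βl)) := by
    unfold Eij
    rw [hXkeq, hXkeq'', hiLin s, hjLin s']
    have hsC : (s:ℂ) = ((n m : ℂ) * ((p:ℂ) + q)) / (ε:ℂ) := by
      rw [hscast]; push_cast; ring
    have hs'C : (s':ℂ) = ((n m : ℂ) * (p:ℂ)) / (ε:ℂ) := by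
      rw [hs'cast]; push_cast; ring
    rw [hsC, hs'C]
    push_cast
    linear_combination ((n m : ℂ)/(ε:ℂ)) * h1
  have hLcoe : ((Real.toNNReal L : NNReal) : ℝ) = L := Real.coe_toNNReal L hL.le
  have herri : ‖ωi (ζ + s • βl) - ωi (s • βl)‖ ≤ L * ‖ζ‖ := by
    have h := hiLip.dist_le_mul (ζ + s • βl) (s • βl)
    rw [Complex.dist_eq, dist_eq_norm, add_sub_cancel_right, hLcoe] at h
    exact h
  have herrj : ‖ωj (ζ + s' • βl) - ωj (s' • βl)‖ ≤ L * ‖ζ‖ := by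
    have h := hjLip.dist_le_mul (ζ + s' • βl) (s' • βl)
    rw [Complex.dist_eq, dist_eq_norm, add_sub_cancel_right, hLcoe] at h
    exact h
  have hEbound : ‖Eij ωi ωj ωN βl ε ((n m * (p + q) : ℕ) : ℤ) ((n m * q : ℕ) : ℤ) ζ‖
      ≤ 2 * L * (A / ε) := by
    rw [hE]
    calc ‖(ωi (ζ + s • βl) - ωi (s • βl)) - (ωj (ζ + s' • βl) - ωj (s' • βl))‖
        ≤ ‖ωi (ζ + s • βl) - ωi (s • βl)‖
          + ‖ωj (ζ + s' • βl) - ωj (s' • βl)‖ :=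
          norm_sub_le _ _
      _ ≤ L * ‖ζ‖ + L * ‖ζ‖ := add_le_add herri herrj
      _ ≤ 2 * L * (A / ε) := by
            have := mul_le_mul_of_nonneg_left hzb hL.le
            linarith
  have hXklb : s - ‖ζ‖ ≤ ‖ζ + s • βl‖ := by
    have h := norm_sub_le (ζ + s • βl) ζ
    have h2 : (ζ + s • βl) - ζ = s • βl := by abel
    rw [h2, norm_smul, hβlu, Real.norm_eq_abs, abs_of_nonneg hspos, mul_one] at h
    linarith
  have hXk'lb : s' - ‖ζ‖ ≤ ‖ζ + s' • βl‖ := by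
    have h := norm_sub_le (ζ + s' • βl) ζ
    have h2 : (ζ + s' • βl) - ζ = s' • βl := by abel
    rw [h2, norm_smul, hβlu, Real.norm_eq_abs, abs_of_nonneg hs'pos, mul_one] at h
    linarith
  have hhalf' : C₃ / (2*ε) ≤ C₃ * ‖ζ + s' • βl‖ := by
    have e : (1-A)/ε = 1/ε - A/ε := by ring
    have hlb : 1/(2*ε) ≤ ‖ζ + s' • βl‖ := by
      have h12 : (1:ℝ)/(2*ε) ≤ (1-A)/ε := by
        rw [div_le_div_iff₀ (by positivity) hε]
        have t := mul_le_mul_of_nonneg_right hA1 hε.le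
        linarith only [t]
      linarith
    calc C₃ / (2*ε) = C₃ * (1/(2*ε)) := by ring
      _ ≤ C₃ * ‖ζ + s' • βl‖ := by gcongr
  have hhalf : C₃ / (2*ε) ≤ C₃ * ‖ζ + s • βl‖ / ((n m * q : ℕ) : ℝ) := by
    rw [hRcast, le_div_iff₀ (by positivity)]
    have hkey : (n m:ℝ)*q/(2*ε) ≤ s - ‖ζ‖ := by
      have e : (n m:ℝ)*q/(2*ε) = (n m:ℝ)*q/ε - ((n m:ℝ)*q/2)/ε := by ring
      have hA' : A/ε ≤ ((n m:ℝ)*q/2)/ε := by gcongr <;> linarith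
      linarith
    calc C₃/(2*ε) * ((n m:ℝ)*q) = C₃ * ((n m:ℝ)*q/(2*ε)) := by ring
      _ ≤ C₃ * (s - ‖ζ‖) := by gcongr
      _ ≤ C₃ * ‖ζ + s • βl‖ := by gcongr
  have hstrict : 2*L*(A/ε) < C₃/(2*ε) := by
    have h8 : 8*L*A ≤ C₃ := by
      rw [le_div_iff₀ (by positivity)] at hA3
      linarith
    have e1 : 2*L*(A/ε) = (2*L*A)/ε := by ring
    rw [e1, div_lt_div_iff₀ hε (by positivity)]
    have h4 : 0 < C₃ - 4*L*A := by
      have := mul_pos hL hA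
      linarith
    have := mul_pos h4 hε
    linarith only [this]
  refine ⟨?_, ?_, ?_, ?_⟩
  · rw [hXkeq]
    exact mem_cone_aux βl hβlu hβl1 ζ hζΞ.1 s _ hspos hzlts hcone
  · rw [hXkeq']
    exact mem_cone_aux βl hβlu hβl1 ζ hζΞ.1 s' _ hs'pos hzlt hcone'
  · intro hcon
    rw [hXkeq] at hcon
    linarith
  · intro hcon
    rw [hXkeq'] at hcon
    linarith

end
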